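/- Let d ≥ 1 and 2 ≤ p < ∞, and set θ = d(p−2)/(2p + d(p−2)). Then every measurable function f : ℝ^d → ℂ with f ∈ L^p(ℝ^d) and x ↦ |x| f(x) in L²(ℝ^d) belongs to L²(ℝ^d) and satisfies ‖f‖_{L²(ℝ^d)} ≤ 2 ‖ |x| f ‖_{L²(ℝ^d)}^{θ} · ‖f‖_{L^p(ℝ^d)}^{1−θ}. -/

import Mathlib

open MeasureTheory Real Complex Filter Topology ENNReal

noncomputable section

/-- Euclidean space `ℝ^d`. -/
abbrev ESp (d : ℕ) := EuclideanSpace ℝ (Fin d)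

lemma Gamma_three_half : Real.Gamma (3/2) = Real.sqrt π / 2 := by
  have h : (3/2 : ℝ) = 1/2 + 1 := by norm_num
  rw [h, Real.Gamma_add_one (by norm_num), Real.Gamma_one_half_eq]
  ring

lemma omega_bound : ∀ d : ℕ, Real.sqrt π ^ d ≤ 2 * Real.sqrt 2 ^ d * Real.Gamma (d / 2 + 1) := by
  have hsπ : Real.sqrt π ^ 2 = π := Real.sq_sqrt pi_pos.le
  have hs2 : Real.sqrt 2 ^ 2 = 2 := Real.sq_sqrt (by norm_num)
  have hπ4 : π ≤ 4 := by linarith [Real.pi_lt_d2]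
  have h2le : (1:ℝ) ≤ Real.sqrt 2 := by
    nlinarith [Real.sqrt_nonneg 2]
  have hsπ0 : 0 ≤ Real.sqrt π := Real.sqrt_nonneg _
  intro d
  induction d using Nat.strong_induction_on with
  | _ d ih =>
    match d with
    | 0 => simp [Real.Gamma_one]
    | 1 =>
      have : ((1:ℕ):ℝ)/2 + 1 = 3/2 := by norm_num
      rw [this, Gamma_three_half]
      have : 2 * Real.sqrt 2 ^ 1 * (Real.sqrt π / 2) = Real.sqrt 2 * Real.sqrt π := by ring
      rw [this]
      nlinarith
    | 2 =>
      have : ((2:ℕ):ℝ)/2 + 1 = 2 := by norm_num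
      rw [this]
      have : Real.Gamma 2 = 1 := by
        have : (2:ℝ) = 1 + 1 := by norm_num
        rw [this, Real.Gamma_add_one one_ne_zero, Real.Gamma_one]; ring
      rw [this]
      nlinarith
    | 3 =>
      have h52 : ((3:ℕ):ℝ)/2 + 1 = 3/2 + 1 := by norm_num
      rw [h52, Real.Gamma_add_one (by norm_num), Gamma_three_half]
      have hexp : Real.sqrt π ^ 3 = π * Real.sqrt π := by
        nlinarith
      have hexp2 : Real.sqrt 2 ^ 3 = 2 * Real.sqrt 2 := by nlinarith
      rw [hexp, hexp2]
      -- goal: π * √π ≤ 2 * (2 * √2) * (3/2 * (√π/2)) = 3 √2 √π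
      have h315 : π ≤ 3.15 := by linarith [Real.pi_lt_d2]
      have h14 : (1.4:ℝ) ≤ Real.sqrt 2 := by
        nlinarith [Real.sqrt_nonneg 2]
      nlinarith [Real.sqrt_nonneg π]
    | (n+4) =>
      have ihn := ih (n+2) (by omega)
      have hg : ((n+4:ℕ):ℝ)/2 + 1 = (((n+2:ℕ):ℝ)/2 + 1) + 1 := by push_cast; ring
      have hgpos : (0:ℝ) < ((n+2:ℕ):ℝ)/2 + 1 := by positivity
      rw [hg, Real.Gamma_add_one (ne_of_gt hgpos)]
      have hΓpos : 0 < Real.Gamma (((n+2:ℕ):ℝ)/2 + 1) := Real.Gamma_pos_of_pos hgpos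
      have e1 : Real.sqrt π ^ (n+4) = Real.sqrt π ^ (n+2) * π := by
        rw [show n+4 = (n+2)+2 by ring, pow_add, hsπ]
      have e2 : Real.sqrt 2 ^ (n+4) = Real.sqrt 2 ^ (n+2) * 2 := by
        rw [show n+4 = (n+2)+2 by ring, pow_add, hs2]
      rw [e1, e2]
      have hn2 : ((n+2:ℕ):ℝ)/2 + 1 = ((n:ℝ)+4)/2 := by push_cast; ring
      have hπle : π ≤ (n:ℝ) + 4 := by
        have h0 : (0:ℝ) ≤ (n:ℝ) := Nat.cast_nonneg n
        linarith
      calc Real.sqrt π ^ (n+2) * π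
          ≤ (2 * Real.sqrt 2 ^ (n+2) * Real.Gamma (((n+2:ℕ):ℝ)/2 + 1)) * ((n:ℝ)+4) := by
            apply mul_le_mul ihn hπle pi_pos.le
            positivity
        _ = 2 * (Real.sqrt 2 ^ (n+2) * 2) * ((((n+2:ℕ):ℝ)/2 + 1) * Real.Gamma (((n+2:ℕ):ℝ)/2 + 1)) := by
            rw [hn2]; ring

lemma real_key (d : ℕ) (p : ℝ) (hp : 2 ≤ p) (a b ω : ℝ) (ha : 0 < a) (hb : 0 < b)
    (hω : 0 ≤ ω) (hω2 : ω ≤ 2 * Real.sqrt 2 ^ d)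
    (θ R : ℝ) (hθ : θ = d*(p-2)/(2*p + d*(p-2)))
    (hR : R = (a/b)^(1-θ) / Real.sqrt 2) :
    b^(2:ℝ) * (R^d * ω)^(1 - 2/p) + (R⁻¹)^(2:ℝ) * a^(2:ℝ) ≤ 4 * (a^θ * b^(1-θ))^(2:ℝ) := by
  have hp0 : 0 < p := by linarith
  have hdp : (0:ℝ) ≤ (d:ℝ)*(p-2) := by
    have := Nat.cast_nonneg (α := ℝ) d
    nlinarith
  have hD : 0 < 2*p + (d:ℝ)*(p-2) := by linarith
  have hθ0 : 0 ≤ θ := by rw [hθ]; positivity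
  have hθ1 : 1 - θ = 2*p/(2*p + d*(p-2)) := by rw [hθ]; field_simp; ring
  have h1θ : 0 < 1 - θ := by rw [hθ1]; positivity
  set β : ℝ := 1 - 2/p with hβ
  have hβ0 : 0 ≤ β := by
    have : 2/p ≤ 1 := by rw [div_le_one hp0]; linarith
    simp [hβ]; linarith
  have hβ1 : β ≤ 1 := by
    have : 0 < 2/p := by positivity
    simp [hβ]; linarith
  have hkey : (d:ℝ)*β*(1-θ) = 2*θ := by
    rw [hβ, hθ1, hθ]; field_simp
  set A := Real.log a with hA
  set B := Real.log b with hB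
  have ea : a = Real.exp A := (Real.exp_log ha).symm
  have eb : b = Real.exp B := (Real.exp_log hb).symm
  set u := (1-θ)*(A-B) with hu
  have hs2 : (0:ℝ) < Real.sqrt 2 := Real.sqrt_pos.mpr (by norm_num)
  have hs2sq : Real.sqrt 2 ^ (2:ℝ) = 2 := by
    rw [show (2:ℝ) = ((2:ℕ):ℝ) by norm_num, Real.rpow_natCast]
    exact Real.sq_sqrt (by norm_num)
  have hRe : R = Real.exp u / Real.sqrt 2 := by
    rw [hR]
    congr 1
    rw [ea, eb, ← Real.exp_sub, ← Real.exp_mul]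
    rw [hu]; ring_nf
  have hRpos : 0 < R := by rw [hRe]; positivity
  -- second term
  have h2 : (R⁻¹)^(2:ℝ) * a^(2:ℝ) = 2 * Real.exp (2*θ*A + 2*(1-θ)*B) := by
    rw [hRe, ea]
    rw [show (Real.exp u / Real.sqrt 2)⁻¹ = Real.sqrt 2 * Real.exp (-u) by
      rw [Real.exp_neg]; field_simp]
    rw [Real.mul_rpow hs2.le (Real.exp_pos _).le, hs2sq,
      ← Real.exp_mul, ← Real.exp_mul, mul_assoc, ← Real.exp_add]
    congr 1
    rw [hu]; ring
  -- M
  have hM : (a^θ * b^(1-θ))^(2:ℝ) = Real.exp (2*θ*A + 2*(1-θ)*B) := by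
    rw [ea, eb, ← Real.exp_mul, ← Real.exp_mul, ← Real.exp_add, ← Real.exp_mul]
    congr 1
    ring
  -- first term
  have h1 : b^(2:ℝ) * (R^d * ω)^β ≤ 2 * Real.exp (2*θ*A + 2*(1-θ)*B) := by
    set c := ω / Real.sqrt 2 ^ d with hc
    have hc0 : 0 ≤ c := by positivity
    have hc2 : c ≤ 2 := by
      rw [hc, div_le_iff₀ (by positivity)]
      linarith
    have hω' : ω = c * Real.sqrt 2 ^ d := by
      rw [hc]; field_simp
    have hRd : R^d * ω = c * Real.exp ((d:ℝ)*u) := by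
      rw [hω', hRe, div_pow, ← Real.exp_nat_mul]
      field_simp
    rw [hRd, Real.mul_rpow hc0 (Real.exp_pos _).le, ← Real.exp_mul]
    have hcβ : c^β ≤ 2 := by
      calc c^β ≤ 2^β := Real.rpow_le_rpow hc0 hc2 hβ0
        _ ≤ 2^(1:ℝ) := Real.rpow_le_rpow_of_exponent_le one_le_two hβ1
        _ = 2 := Real.rpow_one 2
    have hexp : b^(2:ℝ) * Real.exp ((d:ℝ)*u*β) = Real.exp (2*θ*A + 2*(1-θ)*B) := by
      rw [eb, ← Real.exp_mul, ← Real.exp_add]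
      congr 1
      have : (d:ℝ)*u*β = 2*θ*(A-B) := by
        rw [hu]
        calc (d:ℝ)*((1-θ)*(A-B))*β = ((d:ℝ)*β*(1-θ))*(A-B) := by ring
          _ = 2*θ*(A-B) := by rw [hkey]
      rw [this]; ring
    calc b^(2:ℝ) * (c^β * Real.exp ((d:ℝ)*u*β))
        ≤ b^(2:ℝ) * (2 * Real.exp ((d:ℝ)*u*β)) := by
          apply mul_le_mul_of_nonneg_left _ (by positivity)
          exact mul_le_mul_of_nonneg_right hcβ (Real.exp_pos _).le
      _ = 2 * (b^(2:ℝ) * Real.exp ((d:ℝ)*u*β)) := by ring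
      _ = 2 * Real.exp (2*θ*A + 2*(1-θ)*B) := by rw [hexp]
  rw [h2, hM]
  linarith

theorem localization_interpolation (d : ℕ) (hd : 1 ≤ d) (p : ℝ) (hp : 2 ≤ p)
    (f : ESp d → ℂ) (hf : MemLp f (ENNReal.ofReal p) volume)
    (hxf : MemLp (fun x => (‖x‖ : ℂ) * f x) 2 volume) :
    MemLp f 2 volume ∧
    eLpNorm f 2 volume ≤
      ENNReal.ofReal 2 *
        (eLpNorm (fun x => (‖x‖ : ℂ) * f x) 2 volume) ^
          ((d:ℝ)*(p-2)/(2*p + d*(p-2))) *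
        (eLpNorm f (ENNReal.ofReal p) volume) ^
          (1 - (d:ℝ)*(p-2)/(2*p + d*(p-2))) := by
  have hp0 : 0 < p := by linarith
  set P : ℝ≥0∞ := ENNReal.ofReal p with hPdef
  have hP0 : P ≠ 0 := by
    rw [hPdef]
    exact (ENNReal.ofReal_pos.mpr hp0).ne'
  have hPtop : P ≠ ∞ := ENNReal.ofReal_ne_top
  have hPreal : P.toReal = p := ENNReal.toReal_ofReal hp0.le
  have hP2 : (2:ℝ≥0∞) ≤ P := by
    rw [hPdef, show (2:ℝ≥0∞) = ENNReal.ofReal 2 by norm_num]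
    exact ENNReal.ofReal_le_ofReal hp
  set g : ESp d → ℂ := fun x => (‖x‖ : ℂ) * f x with hgdef
  set θ : ℝ := (d:ℝ)*(p-2)/(2*p + d*(p-2)) with hθdef
  have hdp : (0:ℝ) ≤ (d:ℝ)*(p-2) := by
    have := Nat.cast_nonneg (α := ℝ) d
    nlinarith
  have hD : (0:ℝ) < 2*p + (d:ℝ)*(p-2) := by linarith
  have hθ0 : 0 ≤ θ := by rw [hθdef]; positivity
  have hθ1 : 1 - θ = 2*p/(2*p + d*(p-2)) := by rw [hθdef]; field_simp; ring
  have h1θ : 0 < 1 - θ := by rw [hθ1]; positivity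
  -- trivial case
  by_cases hf0 : f =ᵐ[volume] 0
  · constructor
    · exact MemLp.zero.ae_eq hf0.symm
    · rw [eLpNorm_congr_ae hf0, eLpNorm_zero]
      exact zero_le
  -- nontrivial case
  haveI : Nonempty (Fin d) := ⟨⟨0, hd⟩⟩
  haveI : Nontrivial (ESp d) := by
    refine ⟨EuclideanSpace.single ⟨0, hd⟩ 1, 0, fun h => ?_⟩
    have := congrArg (fun v : ESp d => v ⟨0, hd⟩) h
    simp [EuclideanSpace.single_apply] at this
  set A := eLpNorm g 2 volume with hAdef
  set B := eLpNorm f P volume with hBdef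
  have hAtop : A ≠ ∞ := hxf.2.ne
  have hBtop : B ≠ ∞ := hf.2.ne
  have hB0 : B ≠ 0 := by
    rw [hBdef, Ne, eLpNorm_eq_zero_iff hf.1 hP0]
    exact hf0
  have hA0 : A ≠ 0 := by
    rw [hAdef, Ne, eLpNorm_eq_zero_iff hxf.1 two_ne_zero]
    intro hg0
    apply hf0
    have h0 : ∀ᵐ x : ESp d ∂volume, x ≠ 0 := by
      rw [ae_iff]
      have : {x : ESp d | ¬ x ≠ 0} = {0} := by ext x; simp
      rw [this]
      exact measure_singleton 0
    filter_upwards [hg0, h0] with x hgx hx0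
    simp only [hgdef, Pi.zero_apply] at hgx ⊢
    rcases mul_eq_zero.mp hgx with h | h
    · exfalso
      apply hx0
      rw [Complex.ofReal_eq_zero] at h
      exact norm_eq_zero.mp h
    · exact h
  set a := A.toReal with hadef
  set b := B.toReal with hbdef
  have ha : 0 < a := ENNReal.toReal_pos hA0 hAtop
  have hb : 0 < b := ENNReal.toReal_pos hB0 hBtop
  have hAa : A = ENNReal.ofReal a := (ENNReal.ofReal_toReal hAtop).symm
  have hBb : B = ENNReal.ofReal b := (ENNReal.ofReal_toReal hBtop).symm
  set R : ℝ := (a/b)^(1-θ) / Real.sqrt 2 with hRdef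
  have hRpos : 0 < R := by
    apply div_pos (Real.rpow_pos_of_pos (div_pos ha hb) _) (Real.sqrt_pos.mpr (by norm_num))
  set ω : ℝ := Real.sqrt π ^ d / Real.Gamma (d/2 + 1) with hωdef
  have hΓ : 0 < Real.Gamma ((d:ℝ)/2 + 1) := Real.Gamma_pos_of_pos (by positivity)
  have hω0 : 0 ≤ ω := by rw [hωdef]; positivity
  have hω2 : ω ≤ 2 * Real.sqrt 2 ^ d := by
    rw [hωdef, div_le_iff₀ hΓ]
    exact omega_bound d
  set s : Set (ESp d) := Metric.ball (0 : ESp d) R with hsdef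
  have hvol : volume s = ENNReal.ofReal (R^d * ω) := by
    rw [hsdef, EuclideanSpace.volume_ball, Fintype.card_fin,
      ← ENNReal.ofReal_pow hRpos.le, ← ENNReal.ofReal_mul (pow_nonneg hRpos.le d)]
  -- lintegral identities
  have h2norm : ∀ (h : ESp d → ℂ) (μ : Measure (ESp d)),
      eLpNorm h 2 μ = (∫⁻ x, (‖h x‖₊ : ℝ≥0∞) ^ (2:ℝ) ∂μ) ^ (1/2:ℝ) := by
    intro h μ
    rw [eLpNorm_eq_lintegral_rpow_enorm_toReal two_ne_zero ENNReal.ofNat_ne_top]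
    simp only [enorm_eq_nnnorm]
    norm_num
  have hsq : ∀ (h : ESp d → ℂ) (μ : Measure (ESp d)),
      (∫⁻ x, (‖h x‖₊ : ℝ≥0∞) ^ (2:ℝ) ∂μ) = (eLpNorm h 2 μ) ^ (2:ℝ) := by
    intro h μ
    rw [h2norm, ← ENNReal.rpow_mul]
    norm_num
  set I2 := ∫⁻ x, (‖f x‖₊ : ℝ≥0∞) ^ (2:ℝ) with hI2def
  set J := ∫⁻ x, (‖g x‖₊ : ℝ≥0∞) ^ (2:ℝ) with hJdef
  have hJA : J = A ^ (2:ℝ) := hsq g volume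
  -- split
  have hsplit : I2 = (∫⁻ x in s, (‖f x‖₊ : ℝ≥0∞) ^ (2:ℝ)) + ∫⁻ x in sᶜ, (‖f x‖₊ : ℝ≥0∞) ^ (2:ℝ) :=
    (lintegral_add_compl _ measurableSet_ball).symm
  -- inner bound
  have hinner : (∫⁻ x in s, (‖f x‖₊ : ℝ≥0∞) ^ (2:ℝ)) ≤
      ENNReal.ofReal (b^(2:ℝ) * (R^d * ω)^(1 - 2/p)) := by
    have hexp : 1/(2:ℝ≥0∞).toReal - 1/P.toReal = 1/2 - 1/p := by
      rw [hPreal]; norm_num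
    have h1 : eLpNorm f 2 (volume.restrict s) ≤ B * (volume s) ^ (1/2 - 1/p) := by
      have h0 := eLpNorm_le_eLpNorm_mul_rpow_measure_univ (μ := volume.restrict s) hP2 (hf.1.restrict)
      rw [Measure.restrict_apply_univ, hexp] at h0
      exact h0.trans (mul_le_mul' (eLpNorm_mono_measure f Measure.restrict_le_self) le_rfl)
    calc (∫⁻ x in s, (‖f x‖₊ : ℝ≥0∞) ^ (2:ℝ))
        = (eLpNorm f 2 (volume.restrict s)) ^ (2:ℝ) := hsq f _
      _ ≤ (B * (volume s) ^ (1/2 - 1/p)) ^ (2:ℝ) := by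
          exact ENNReal.rpow_le_rpow h1 (by norm_num)
      _ = B ^ (2:ℝ) * (volume s) ^ (1 - 2/p) := by
          rw [ENNReal.mul_rpow_of_nonneg _ _ (by norm_num : (0:ℝ) ≤ 2), ← ENNReal.rpow_mul]
          congr 1
          ring_nf
      _ = ENNReal.ofReal (b^(2:ℝ) * (R^d * ω)^(1 - 2/p)) := by
          rw [hBb, hvol, ENNReal.ofReal_rpow_of_pos hb,
            ENNReal.ofReal_rpow_of_nonneg (mul_nonneg (pow_nonneg hRpos.le d) hω0) (by
              have h21 : 2/p ≤ 1 := by rw [div_le_one hp0]; linarith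
              linarith),
            ← ENNReal.ofReal_mul (Real.rpow_nonneg hb.le 2)]
  -- outer bound
  have houter : (∫⁻ x in sᶜ, (‖f x‖₊ : ℝ≥0∞) ^ (2:ℝ)) ≤
      ENNReal.ofReal ((R⁻¹)^(2:ℝ) * a^(2:ℝ)) := by
    have hpt : ∀ x ∈ sᶜ, (‖f x‖₊ : ℝ≥0∞) ^ (2:ℝ) ≤
        ENNReal.ofReal ((R⁻¹)^(2:ℝ)) * (‖g x‖₊ : ℝ≥0∞) ^ (2:ℝ) := by
      intro x hx
      have hxR : R ≤ ‖x‖ := by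
        simp only [hsdef, Set.mem_compl_iff, Metric.mem_ball, dist_zero_right, not_lt] at hx
        exact hx
      have hreal : ‖f x‖ ≤ R⁻¹ * ‖g x‖ := by
        have hgx : ‖g x‖ = ‖x‖ * ‖f x‖ := by
          simp [hgdef, norm_mul]
        rw [hgx, ← mul_assoc]
        have h1 : (1:ℝ) ≤ R⁻¹ * ‖x‖ := by
          rw [← inv_mul_cancel₀ hRpos.ne']
          exact mul_le_mul_of_nonneg_left hxR (by positivity)
        nlinarith [norm_nonneg (f x)]
      calc (‖f x‖₊ : ℝ≥0∞) ^ (2:ℝ) = (ENNReal.ofReal ‖f x‖) ^ (2:ℝ) := by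
            rw [ofReal_norm, enorm_eq_nnnorm]
        _ ≤ (ENNReal.ofReal (R⁻¹ * ‖g x‖)) ^ (2:ℝ) :=
            ENNReal.rpow_le_rpow (ENNReal.ofReal_le_ofReal hreal) (by norm_num)
        _ = ENNReal.ofReal ((R⁻¹)^(2:ℝ)) * (‖g x‖₊ : ℝ≥0∞) ^ (2:ℝ) := by
            rw [ENNReal.ofReal_mul (by positivity),
              ENNReal.mul_rpow_of_nonneg _ _ (by norm_num : (0:ℝ) ≤ 2),
              ENNReal.ofReal_rpow_of_pos (inv_pos.mpr hRpos), ofReal_norm, enorm_eq_nnnorm]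
    calc (∫⁻ x in sᶜ, (‖f x‖₊ : ℝ≥0∞) ^ (2:ℝ))
        ≤ ∫⁻ x in sᶜ, ENNReal.ofReal ((R⁻¹)^(2:ℝ)) * (‖g x‖₊ : ℝ≥0∞) ^ (2:ℝ) :=
          setLIntegral_mono' measurableSet_ball.compl hpt
      _ = ENNReal.ofReal ((R⁻¹)^(2:ℝ)) * ∫⁻ x in sᶜ, (‖g x‖₊ : ℝ≥0∞) ^ (2:ℝ) :=
          lintegral_const_mul' _ _ ENNReal.ofReal_ne_top
      _ ≤ ENNReal.ofReal ((R⁻¹)^(2:ℝ)) * J := by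
          gcongr
          exact setLIntegral_le_lintegral _ _
      _ = ENNReal.ofReal ((R⁻¹)^(2:ℝ) * a^(2:ℝ)) := by
          rw [hJA, hAa, ENNReal.ofReal_rpow_of_pos ha,
            ← ENNReal.ofReal_mul (by positivity)]
  -- combine
  set M : ℝ := a^θ * b^(1-θ) with hMdef
  have hM0 : 0 < M := by
    apply mul_pos (Real.rpow_pos_of_pos ha _) (Real.rpow_pos_of_pos hb _)
  have htotal : I2 ≤ ENNReal.ofReal ((2*M)^(2:ℝ)) := by
    rw [hsplit]
    calc (∫⁻ x in s, (‖f x‖₊ : ℝ≥0∞) ^ (2:ℝ)) + ∫⁻ x in sᶜ, (‖f x‖₊ : ℝ≥0∞) ^ (2:ℝ)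
        ≤ ENNReal.ofReal (b^(2:ℝ) * (R^d * ω)^(1 - 2/p)) +
          ENNReal.ofReal ((R⁻¹)^(2:ℝ) * a^(2:ℝ)) := add_le_add hinner houter
      _ = ENNReal.ofReal (b^(2:ℝ) * (R^d * ω)^(1 - 2/p) + (R⁻¹)^(2:ℝ) * a^(2:ℝ)) :=
          (ENNReal.ofReal_add
            (mul_nonneg (Real.rpow_nonneg hb.le 2)
              (Real.rpow_nonneg (mul_nonneg (pow_nonneg hRpos.le d) hω0) _))
            (mul_nonneg (Real.rpow_nonneg (inv_nonneg.mpr hRpos.le) 2)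
              (Real.rpow_nonneg ha.le 2))).symm
      _ ≤ ENNReal.ofReal (4 * M^(2:ℝ)) := ENNReal.ofReal_le_ofReal
          (real_key d p hp a b ω ha hb hω0 hω2 θ R hθdef hRdef)
      _ = ENNReal.ofReal ((2*M)^(2:ℝ)) := by
          congr 1
          rw [Real.mul_rpow (by norm_num) hM0.le,
            show (2:ℝ)^(2:ℝ) = 4 by
              rw [show (2:ℝ) = ((2:ℕ):ℝ) by norm_num, Real.rpow_natCast]; norm_num]
  have hfinal : eLpNorm f 2 volume ≤ ENNReal.ofReal (2*M) := by
    rw [h2norm f volume, ← hI2def]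
    calc I2 ^ (1/2:ℝ) ≤ (ENNReal.ofReal ((2*M)^(2:ℝ))) ^ (1/2:ℝ) :=
          ENNReal.rpow_le_rpow htotal (by norm_num)
      _ = ENNReal.ofReal (2*M) := by
          have h2M : (0:ℝ) ≤ 2*M := by linarith
          rw [ENNReal.ofReal_rpow_of_nonneg (Real.rpow_nonneg h2M 2) (by norm_num),
            ← Real.rpow_mul h2M]
          norm_num
  constructor
  · exact ⟨hf.1, lt_of_le_of_lt hfinal ENNReal.ofReal_lt_top⟩
  · calc eLpNorm f 2 volume ≤ ENNReal.ofReal (2*M) := hfinal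
      _ = ENNReal.ofReal 2 * A ^ θ * B ^ (1-θ) := by
          rw [hMdef, hAa, hBb, ENNReal.ofReal_rpow_of_pos ha, ENNReal.ofReal_rpow_of_pos hb,
            ← ENNReal.ofReal_mul (by norm_num), ← ENNReal.ofReal_mul (by positivity)]
          ring_nf
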